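/- Let 0 ≤ c ≤ 1. Let A₁(c) : [0,1)² → [0,1] be the indicator function of the set {(x,y) : min(x,y) < 1−√(1−c)} and let A₂(c) : [0,1)² → [0,1] be the indicator function of the set {(x,y) : max(x,y) < √c}. Then ∫₀¹∫₀¹ A₁(c)(x,y) dx dy = ∫₀¹∫₀¹ A₂(c)(x,y) dx dy = c, and S(A₁(c)) = (1−√(1−c))²·((c+1)√(1−c)+c) and S(A₂(c)) = c^{5/2}. -/

import Mathlib

open MeasureTheory

/-- `ell A x = ∫₀¹ A(x,y) dy`. -/
noncomputable def ell (A : ℝ → ℝ → ℝ) (x : ℝ) : ℝ := ∫ y in (0:ℝ)..1, A x y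

/-- `S(A) = ∫₀¹∫₀¹ ℓ(x)·ℓ(y)·min(ℓ(x),ℓ(y)) dx dy`. -/
noncomputable def Sfun (A : ℝ → ℝ → ℝ) : ℝ :=
  ∫ x in (0:ℝ)..1, ∫ y in (0:ℝ)..1, ell A x * ell A y * min (ell A x) (ell A y)

/-- The quasi-star step function: indicator of `{(x,y) : min x y < 1 - √(1-c)}`. -/
noncomputable def Aone (c : ℝ) : ℝ → ℝ → ℝ :=
  fun x y => if min x y < 1 - Real.sqrt (1 - c) then 1 else 0

/-- The quasi-clique step function: indicator of `{(x,y) : max x y < √c}`. -/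
noncomputable def Atwo (c : ℝ) : ℝ → ℝ → ℝ :=
  fun x y => if max x y < Real.sqrt c then 1 else 0

lemma integral_step (t a b : ℝ) (h0 : 0 ≤ t) (h1 : t ≤ 1) :
    (∫ x in (0:ℝ)..1, if x < t then a else b) = t * a + (1 - t) * b := by
  have hfun : (fun x : ℝ => if x < t then a else b)
      = fun x => Set.indicator (Set.Iio t) (fun _ => a - b) x + b := by
    funext x
    by_cases h : x < t <;> simp [Set.indicator, Set.mem_Iio, h]
  have hint : IntervalIntegrable
      (fun x => Set.indicator (Set.Iio t) (fun _ : ℝ => a - b) x) volume 0 1 := by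
    rw [intervalIntegrable_iff_integrableOn_Ioc_of_le (by norm_num : (0:ℝ) ≤ 1)]
    exact (integrableOn_const measure_Ioc_lt_top.ne).indicator measurableSet_Iio
  rw [hfun, intervalIntegral.integral_add hint intervalIntegrable_const,
    intervalIntegral.integral_const,
    intervalIntegral.integral_of_le (by norm_num : (0:ℝ) ≤ 1),
    setIntegral_indicator measurableSet_Iio]
  have hset : Set.Ioc (0:ℝ) 1 ∩ Set.Iio t = Set.Ioo 0 t := by
    ext y
    simp only [Set.mem_inter_iff, Set.mem_Ioc, Set.mem_Iio, Set.mem_Ioo]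
    constructor
    · rintro ⟨⟨h1', _⟩, h3⟩; exact ⟨h1', h3⟩
    · rintro ⟨ha, hb⟩; exact ⟨⟨ha, by linarith⟩, hb⟩
  rw [hset, setIntegral_const, measureReal_def, Real.volume_Ioo]
  rw [ENNReal.toReal_ofReal (by linarith : (0:ℝ) ≤ t - 0)]
  simp only [smul_eq_mul, sub_zero]
  ring

theorem quasiStar_quasiClique_values (c : ℝ) (hc0 : 0 ≤ c) (hc1 : c ≤ 1) :
    (∫ x in (0:ℝ)..1, ∫ y in (0:ℝ)..1, Aone c x y) = c ∧
    (∫ x in (0:ℝ)..1, ∫ y in (0:ℝ)..1, Atwo c x y) = c ∧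
    Sfun (Aone c) = (1 - Real.sqrt (1 - c)) ^ 2 * ((c + 1) * Real.sqrt (1 - c) + c) ∧
    Sfun (Atwo c) = c ^ ((5 : ℝ) / 2) := by
  have h1c : (0:ℝ) ≤ 1 - c := by linarith
  set s := Real.sqrt (1 - c) with hsdef
  have hs2 : s ^ 2 = 1 - c := Real.sq_sqrt h1c
  have hs0 : 0 ≤ s := Real.sqrt_nonneg _
  have hs1 : s ≤ 1 := Real.sqrt_le_one.2 (by linarith)
  set u := Real.sqrt c with hudef
  have hu2 : u ^ 2 = c := Real.sq_sqrt hc0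
  have hu0 : 0 ≤ u := Real.sqrt_nonneg _
  have hu1 : u ≤ 1 := Real.sqrt_le_one.2 hc1
  have ht0 : 0 ≤ 1 - s := by linarith
  have ht1 : 1 - s ≤ 1 := by linarith
  -- ell formulas
  have hellA : ∀ x : ℝ, ell (Aone c) x = if x < 1 - s then 1 else (1 - s) := by
    intro x
    unfold ell Aone
    by_cases hx : x < 1 - s
    · rw [if_pos hx]
      have : (fun y : ℝ => if min x y < 1 - s then (1:ℝ) else 0) = fun _ => (1:ℝ) := by
        funext y
        exact if_pos (lt_of_le_of_lt (min_le_left _ _) hx)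
      rw [this, intervalIntegral.integral_const]
      norm_num
    · rw [if_neg hx]
      have : (fun y : ℝ => if min x y < 1 - s then (1:ℝ) else 0)
          = fun y => if y < 1 - s then (1:ℝ) else 0 := by
        funext y
        by_cases hy : y < 1 - s
        · rw [if_pos (by rw [min_lt_iff]; exact Or.inr hy), if_pos hy]
        · rw [if_neg (by rw [min_lt_iff]; tauto), if_neg hy]
      rw [this, integral_step _ _ _ ht0 ht1]
      ring
  have hellB : ∀ x : ℝ, ell (Atwo c) x = if x < u then u else 0 := by
    intro x
    unfold ell Atwo
    by_cases hx : x < u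
    · rw [if_pos hx]
      have : (fun y : ℝ => if max x y < u then (1:ℝ) else 0)
          = fun y => if y < u then (1:ℝ) else 0 := by
        funext y
        by_cases hy : y < u
        · rw [if_pos (max_lt hx hy), if_pos hy]
        · rw [if_neg (by rw [max_lt_iff]; tauto), if_neg hy]
      rw [this, integral_step _ _ _ hu0 hu1]
      ring
    · rw [if_neg hx]
      have : (fun y : ℝ => if max x y < u then (1:ℝ) else 0) = fun _ => (0:ℝ) := by
        funext y
        exact if_neg (by rw [max_lt_iff]; tauto)
      rw [this, intervalIntegral.integral_const]
      norm_num
  refine ⟨?_, ?_, ?_, ?_⟩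
  · have h : (∫ x in (0:ℝ)..1, ∫ y in (0:ℝ)..1, Aone c x y)
        = ∫ x in (0:ℝ)..1, if x < 1 - s then (1:ℝ) else (1 - s) :=
      intervalIntegral.integral_congr fun x _ => hellA x
    rw [h, integral_step _ _ _ ht0 ht1]
    linear_combination -hs2
  · have h : (∫ x in (0:ℝ)..1, ∫ y in (0:ℝ)..1, Atwo c x y)
        = ∫ x in (0:ℝ)..1, if x < u then u else 0 :=
      intervalIntegral.integral_congr fun x _ => hellB x
    rw [h, integral_step _ _ _ hu0 hu1]
    linear_combination hu2
  · unfold Sfun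
    have h : (∫ x in (0:ℝ)..1, ∫ y in (0:ℝ)..1,
          ell (Aone c) x * ell (Aone c) y * min (ell (Aone c) x) (ell (Aone c) y))
        = ∫ x in (0:ℝ)..1, if x < 1 - s
            then ((1-s) * 1 + (1-(1-s)) * ((1-s)*(1-s)))
            else ((1-s) * ((1-s)*(1-s)) + (1-(1-s)) * ((1-s)*(1-s)*(1-s))) := by
      apply intervalIntegral.integral_congr
      intro x _
      beta_reduce
      by_cases hx : x < 1 - s
      · rw [if_pos hx]
        have h2 : (fun y : ℝ => ell (Aone c) x * ell (Aone c) y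
              * min (ell (Aone c) x) (ell (Aone c) y))
            = fun y => if y < 1 - s then (1:ℝ) else (1-s)*(1-s) := by
          funext y
          rw [hellA x, hellA y, if_pos hx]
          by_cases hy : y < 1 - s
          · rw [if_pos hy, if_pos hy]; simp
          · rw [if_neg hy, if_neg hy, min_eq_right ht1]; ring
        rw [h2, integral_step _ _ _ ht0 ht1]
      · rw [if_neg hx]
        have h2 : (fun y : ℝ => ell (Aone c) x * ell (Aone c) y
              * min (ell (Aone c) x) (ell (Aone c) y))
            = fun y => if y < 1 - s then (1-s)*(1-s) else (1-s)*(1-s)*(1-s) := by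
          funext y
          rw [hellA x, hellA y, if_neg hx]
          by_cases hy : y < 1 - s
          · rw [if_pos hy, if_pos hy, min_eq_left ht1]; ring
          · rw [if_neg hy, if_neg hy, min_self]
        rw [h2, integral_step _ _ _ ht0 ht1]
    rw [h, integral_step _ _ _ ht0 ht1]
    linear_combination (-(1-s)^2*(1+s)) * hs2
  · unfold Sfun
    have h : (∫ x in (0:ℝ)..1, ∫ y in (0:ℝ)..1,
          ell (Atwo c) x * ell (Atwo c) y * min (ell (Atwo c) x) (ell (Atwo c) y))
        = ∫ x in (0:ℝ)..1, if x < u then (u * (u*u*u) + (1-u) * 0) else 0 := by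
      apply intervalIntegral.integral_congr
      intro x _
      beta_reduce
      by_cases hx : x < u
      · rw [if_pos hx]
        have h2 : (fun y : ℝ => ell (Atwo c) x * ell (Atwo c) y
              * min (ell (Atwo c) x) (ell (Atwo c) y))
            = fun y => if y < u then u*u*u else 0 := by
          funext y
          rw [hellB x, hellB y, if_pos hx]
          by_cases hy : y < u
          · rw [if_pos hy, if_pos hy, min_self]
          · rw [if_neg hy, if_neg hy, min_eq_right hu0]; ring
        rw [h2, integral_step _ _ _ hu0 hu1]
      · rw [if_neg hx]
        have h2 : (fun y : ℝ => ell (Atwo c) x * ell (Atwo c) y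
              * min (ell (Atwo c) x) (ell (Atwo c) y)) = fun _ => (0:ℝ) := by
          funext y
          rw [hellB x, hellB y, if_neg hx]
          by_cases hy : y < u
          · rw [if_pos hy, min_eq_left hu0]; ring
          · rw [if_neg hy, min_self]; ring
        rw [h2, intervalIntegral.integral_const]
        norm_num
    rw [h, integral_step _ _ _ hu0 hu1]
    have h5 : u ^ (5:ℕ) = c ^ ((5:ℝ)/2) := by
      rw [hudef, Real.sqrt_eq_rpow, ← Real.rpow_natCast (c ^ ((1:ℝ)/2)) 5,
        ← Real.rpow_mul hc0]
      norm_num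
    rw [← h5]
    ring
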